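/- Let S be a Cu-semigroup and let x, y be full elements of S with ρ(x, y) = 0. Then: (1) rc(S, y) ≤ rc(S, n·x) for every positive integer n; (2) if rc(S, x) < ∞, then rc(S, y) = 0; (3) if moreover ρ(y, x) = 0, then rc(S, y) = rc(S, x); (4) if ρ(y, x) = 0 and rc(S, y) < ∞, then rc(S, x) = rc(S, y) = 0. -/

import Mathlib

open scoped ENNReal

/-- `x' ≪ x`: for every increasing sequence whose supremum is `≥ x`,
some term of the sequence dominates `x'`. -/
def CuWayBelow {S : Type*} [Preorder S] (x' x : S) : Prop :=
  ∀ f : ℕ → S, Monotone f → ∀ s : S, IsLUB (Set.range f) s → x ≤ s → ∃ n, x' ≤ f n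

/-- A `Cu`-semigroup: a partially ordered abelian monoid whose least element is `0`,
satisfying the axioms (O1)–(O4). -/
class CuSemigroup (S : Type*) extends AddCommMonoid S, PartialOrder S, IsOrderedAddMonoid S where
  zero_le : ∀ x : S, 0 ≤ x
  O1 : ∀ f : ℕ → S, Monotone f → ∃ s : S, IsLUB (Set.range f) s
  O2 : ∀ x : S, ∃ f : ℕ → S, (∀ n, CuWayBelow (f n) (f (n + 1))) ∧ IsLUB (Set.range f) x
  O3 : ∀ {x' x y' y : S}, CuWayBelow x' x → CuWayBelow y' y → CuWayBelow (x' + y') (x + y)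
  O4 : ∀ f g : ℕ → S, Monotone f → Monotone g → ∀ a b : S,
      IsLUB (Set.range f) a → IsLUB (Set.range g) b →
      IsLUB (Set.range fun n => f n + g n) (a + b)

/-- A functional on a `Cu`-semigroup: a map `S → [0,∞]` which is additive, order
preserving, sends `0` to `0`, and preserves suprema of increasing sequences. -/
structure IsCuFunctional {S : Type*} [CuSemigroup S] (Λ : S → ℝ≥0∞) : Prop where
  map_zero : Λ 0 = 0
  map_add : ∀ x y : S, Λ (x + y) = Λ x + Λ y
  mono : Monotone Λ
  map_sup : ∀ f : ℕ → S, Monotone f → ∀ s : S, IsLUB (Set.range f) s → Λ s = ⨆ n, Λ (f n)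

/-- `x` is full if `∞ · x = sup_n (n • x)` is the largest element of `S`. -/
def IsFull {S : Type*} [CuSemigroup S] (x : S) : Prop :=
  ∀ s : S, IsLUB (Set.range fun n : ℕ => n • x) s → ∀ y : S, y ≤ s

/-- `F_w(S) ≠ ∅`: there exists a functional normalized at `w`. -/
def FNormNonempty {S : Type*} [CuSemigroup S] (w : S) : Prop :=
  ∃ Λ : S → ℝ≥0∞, IsCuFunctional Λ ∧ Λ w = 1

/-- The rank ratio `ρ(x, y)`: the infimum of all `r ∈ (0,∞)` with
`λ(x) ≤ r·λ(y)` for every functional `λ`; `∞` if there is no such `r`. -/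
noncomputable def rankRatio {S : Type*} [CuSemigroup S] (x y : S) : ℝ≥0∞ :=
  sInf {r : ℝ≥0∞ | 0 < r ∧ r ≠ ⊤ ∧ ∀ Λ : S → ℝ≥0∞, IsCuFunctional Λ → Λ x ≤ r * Λ y}

/-- `S` has `r`-comparison relative to `w`. -/
def HasRComparison {S : Type*} [CuSemigroup S] (r : ℝ≥0∞) (w : S) : Prop :=
  ∀ x y : S, (∀ Λ : S → ℝ≥0∞, IsCuFunctional Λ → Λ x + r * Λ w ≤ Λ y) → x ≤ y

/-- The radius of comparison of `S` relative to `w`: the infimum of all `r ∈ (0,∞)`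
for which `S` has `r`-comparison relative to `w`; `∞` if there is no such `r`. -/
noncomputable def rc {S : Type*} [CuSemigroup S] (w : S) : ℝ≥0∞ :=
  sInf {r : ℝ≥0∞ | 0 < r ∧ r ≠ ⊤ ∧ HasRComparison r w}

/-- Lemma (RkRation0): for full elements `x, y` with `ρ(x, y) = 0`:
(1) `rc(S,y) ≤ rc(S, n·x)` for every positive integer `n`;
(2) if `rc(S,x) < ∞` then `rc(S,y) = 0`;
(3) if moreover `ρ(y,x) = 0` then `rc(S,y) = rc(S,x)`;
(4) if `ρ(y,x) = 0` and `rc(S,y) < ∞` then `rc(S,x) = rc(S,y) = 0`. -/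
private lemma aux_vanish {S : Type*} [CuSemigroup S] {x y : S}
    (h : rankRatio x y = 0) {Λ : S → ℝ≥0∞} (hΛ : IsCuFunctional Λ)
    (hy : Λ y ≠ ⊤) : Λ x = 0 := by
  have key : ∀ δ : ℝ≥0∞, 0 < δ → δ ≠ ⊤ → Λ x ≤ δ := by
    intro δ hδ hδt
    by_cases hy0 : Λ y = 0
    · have hlt : rankRatio x y < 1 := by rw [h]; exact zero_lt_one
      rw [rankRatio] at hlt
      obtain ⟨r, ⟨hr0, hrt, hr⟩, -⟩ := sInf_lt_iff.mp hlt
      have := hr Λ hΛ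
      rw [hy0, mul_zero] at this
      exact le_trans this zero_le
    · have hε : (0:ℝ≥0∞) < δ / Λ y := ENNReal.div_pos hδ.ne' hy
      have hlt : rankRatio x y < δ / Λ y := by rw [h]; exact hε
      rw [rankRatio] at hlt
      obtain ⟨r, ⟨hr0, hrt, hr⟩, hrlt⟩ := sInf_lt_iff.mp hlt
      calc Λ x ≤ r * Λ y := hr Λ hΛ
        _ ≤ (δ / Λ y) * Λ y := mul_le_mul_left hrlt.le _
        _ = δ := by rw [ENNReal.div_mul_cancel hy0 hy]
  have h0 : Λ x ≤ 0 := ENNReal.le_of_forall_pos_le_add fun ε hε _ => by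
    simpa using key ε (ENNReal.coe_pos.mpr hε) ENNReal.coe_ne_top
  exact le_zero_iff.mp h0

private lemma aux_smul {S : Type*} [CuSemigroup S] {Λ : S → ℝ≥0∞}
    (hΛ : IsCuFunctional Λ) (n : ℕ) (x : S) : Λ (n • x) = n * Λ x := by
  induction n with
  | zero => simpa using hΛ.map_zero
  | succ n ih =>
      rw [succ_nsmul, hΛ.map_add, ih, Nat.cast_succ, add_mul, one_mul]

private lemma aux_comp {S : Type*} [CuSemigroup S] {x y : S}
    (h : rankRatio x y = 0) {n : ℕ} {r : ℝ≥0∞}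
    (hcomp : HasRComparison r (n • x)) :
    ∀ r' : ℝ≥0∞, 0 < r' → HasRComparison r' y := by
  intro r' hr' a b hab
  apply hcomp
  intro Λ hΛ
  by_cases hyt : Λ y = ⊤
  · have hb : Λ b = ⊤ := by
      have hle := hab Λ hΛ
      rw [hyt, ENNReal.mul_top hr'.ne'] at hle
      exact top_le_iff.mp (le_trans le_add_self hle)
    rw [hb]; exact le_top
  · rw [aux_smul hΛ, aux_vanish h hΛ hyt, mul_zero, mul_zero, add_zero]
    exact le_trans le_self_add (hab Λ hΛ)

private lemma aux_rc_zero {S : Type*} [CuSemigroup S] {y : S}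
    (h : ∀ r : ℝ≥0∞, 0 < r → HasRComparison r y) : rc y = 0 := by
  have hmem : ∀ ε : ℝ≥0∞, 0 < ε → ε ≠ ⊤ → rc y ≤ ε := fun ε h1 h2 =>
    sInf_le (show ε ∈ {r : ℝ≥0∞ | 0 < r ∧ r ≠ ⊤ ∧ HasRComparison r y} from
      ⟨h1, h2, h _ h1⟩)
  have h0 : rc y ≤ 0 := ENNReal.le_of_forall_pos_le_add fun ε hε _ => by
    simpa using hmem ε (ENNReal.coe_pos.mpr hε) ENNReal.coe_ne_top
  exact le_zero_iff.mp h0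

private lemma aux_rc_zero_of_ne_top {S : Type*} [CuSemigroup S] {x y : S}
    (h : rankRatio x y = 0) (hx : rc x ≠ ⊤) : rc y = 0 := by
  have hne : {r : ℝ≥0∞ | 0 < r ∧ r ≠ ⊤ ∧ HasRComparison r x}.Nonempty := by
    by_contra hne
    rw [Set.not_nonempty_iff_eq_empty] at hne
    apply hx
    rw [rc, hne, sInf_empty]
  obtain ⟨r, hr0, hrt, hr⟩ := hne
  have hr1 : HasRComparison r ((1 : ℕ) • x) := by rwa [one_smul]
  exact aux_rc_zero (aux_comp h hr1)

theorem stmt12 {S : Type*} [CuSemigroup S] (x y : S)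
    (hx : IsFull x) (hy : IsFull y) (h : rankRatio x y = 0) :
    (∀ n : ℕ, 0 < n → rc y ≤ rc (n • x)) ∧
      (rc x ≠ ⊤ → rc y = 0) ∧
      (rankRatio y x = 0 → rc y = rc x) ∧
      (rankRatio y x = 0 → rc y ≠ ⊤ → rc x = 0 ∧ rc y = 0) := by
  refine ⟨?_, fun hxt => aux_rc_zero_of_ne_top h hxt, ?_, ?_⟩
  · intro n hn
    by_cases hne : {r : ℝ≥0∞ | 0 < r ∧ r ≠ ⊤ ∧ HasRComparison r (n • x)}.Nonempty
    · obtain ⟨r, hr0, hrt, hr⟩ := hne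
      rw [aux_rc_zero (aux_comp h hr)]
      exact zero_le
    · have ht : rc (n • x) = ⊤ := by
        rw [rc, Set.not_nonempty_iff_eq_empty.mp hne, sInf_empty]
      rw [ht]; exact le_top
  · intro h'
    by_cases hxt : rc x = ⊤
    · by_cases hyt : rc y = ⊤
      · rw [hxt, hyt]
      · exact absurd (aux_rc_zero_of_ne_top h' hyt) (by rw [hxt]; simp)
    · rw [aux_rc_zero_of_ne_top h hxt,
        aux_rc_zero_of_ne_top h' (by rw [aux_rc_zero_of_ne_top h hxt]; simp)]
  · intro h' hyt
    have hx0 : rc x = 0 := aux_rc_zero_of_ne_top h' hyt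
    exact ⟨hx0, aux_rc_zero_of_ne_top h (by rw [hx0]; simp)⟩
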